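/- Fix integers $n \ge 2$, $d$, $m \ge 1$ and positive integers $j_1, \ldots, j_m$ with $j_1 + \cdots + j_m = n$. Let $\Delta = \{(\alpha_1, \ldots, \alpha_m) \in \mathbb{R}^m : 0 \le \alpha_1 < \alpha_2 < \cdots < \alpha_m < 1\}$, and let $S \subseteq \Delta$ be the set of those $(\alpha_1, \ldots, \alpha_m)$ for which there exist integers $\hat n, \hat d, \hat j_1, \ldots, \hat j_m$ with $0 < \hat n < n$, $0 \le \hat j_k \le j_k$ for all $k$, $\hat j_1 + \cdots + \hat j_m = \hat n$, and $(\hat d + \sum_{k=1}^m \alpha_k \hat j_k)/\hat n = (d + \sum_{k=1}^m \alpha_k j_k)/n$. If $\gcd(n, d, j_1, \ldots, j_m) = 1$, then $S$ is nowhere dense in $\Delta$. -/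

import Mathlib

open Finset

lemma aux_union {X : Type*} [TopologicalSpace X] {A B : Set X} (hA : IsClosed A)
    (hiA : interior A = ∅) (hiB : interior B = ∅) : interior (A ∪ B) = ∅ := by
  have h1 : interior (A ∪ B) \ A ⊆ interior B := by
    apply interior_maximal
    · rintro x ⟨hx, hxA⟩
      rcases interior_subset hx with h | h
      · exact absurd h hxA
      · exact h
    · exact isOpen_interior.sdiff hA
  have h2 : interior (A ∪ B) ⊆ A := by
    intro x hx
    by_contra hxA
    have := h1 ⟨hx, hxA⟩
    rw [hiB] at this
    exact this
  have h3 : interior (A ∪ B) ⊆ interior A := interior_maximal h2 isOpen_interior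
  rw [hiA] at h3
  exact Set.subset_empty_iff.mp h3

lemma aux_biUnion {X : Type*} [TopologicalSpace X] {ι : Type*} [DecidableEq ι]
    (F : Finset ι) (G : ι → Set X) (hcl : ∀ p ∈ F, IsClosed (G p))
    (hint : ∀ p ∈ F, interior (G p) = ∅) : interior (⋃ p ∈ F, G p) = ∅ := by
  induction F using Finset.induction_on with
  | empty => simp
  | @insert a s ha ih =>
    rw [Finset.set_biUnion_insert]
    exact aux_union (hcl a (Finset.mem_insert_self a s))
      (hint a (Finset.mem_insert_self a s))
      (ih (fun p hp => hcl p (Finset.mem_insert_of_mem hp))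
          (fun p hp => hint p (Finset.mem_insert_of_mem hp)))

lemma aux_gcd (n d nh dh : ℤ) (m : ℕ) (j jhat : Fin m → ℤ) (hn : 2 ≤ n)
    (hgcd : ∀ h : ℤ, h ∣ n → h ∣ d → (∀ k, h ∣ j k) → IsUnit h)
    (h1 : 0 < nh) (h2 : nh < n)
    (hz : ∀ k, n * jhat k - nh * j k = 0) (hr : nh * d - n * dh = 0) : False := by
  set g : ℤ := (Int.gcd n nh : ℤ) with hg
  have hgpos : 0 < Int.gcd n nh := Int.gcd_pos_of_ne_zero_left nh (by omega)
  have hgz : (0 : ℤ) < g := by rw [hg]; exact_mod_cast hgpos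
  have hdn : g ∣ n := Int.gcd_dvd_left n nh
  have hdnh : g ∣ nh := Int.gcd_dvd_right n nh
  set n' : ℤ := n / g with hn'
  set nh' : ℤ := nh / g with hnh'
  have hng : n = g * n' := (Int.mul_ediv_cancel' hdn).symm
  have hnhg : nh = g * nh' := (Int.mul_ediv_cancel' hdnh).symm
  have hcop : IsCoprime n' nh' := by
    rw [Int.isCoprime_iff_gcd_eq_one]
    exact Int.gcd_div_gcd_div_gcd hgpos
  have hn'pos : 0 < n' := by
    have hpos : 0 < g * n' := by rw [← hng]; omega
    nlinarith
  have hkey : ∀ k, n' * jhat k = nh' * j k := by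
    intro k
    have := hz k
    have h' : g * (n' * jhat k) = g * (nh' * j k) := by
      linear_combination this - jhat k * hng + j k * hnhg
    exact mul_left_cancel₀ (ne_of_gt hgz) h'
  have hdvdj : ∀ k, n' ∣ j k := by
    intro k
    exact hcop.dvd_of_dvd_mul_left ⟨jhat k, (hkey k).symm⟩
  have hdvdd : n' ∣ d := by
    have h' : g * (nh' * d) = g * (n' * dh) := by
      linear_combination hr - d * hnhg + dh * hng
    have h'' : nh' * d = n' * dh := mul_left_cancel₀ (ne_of_gt hgz) h'
    exact hcop.dvd_of_dvd_mul_left ⟨dh, h''⟩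
  have hdvdn : n' ∣ n := ⟨g, by linarith [hng]⟩
  have := hgcd n' hdvdn hdvdd hdvdj
  rw [Int.isUnit_iff] at this
  have hn'1 : n' = 1 := by omega
  rw [hn'1, mul_one] at hng
  have : n ∣ nh := hng ▸ hdnh
  have := Int.le_of_dvd h1 this
  omega

lemma aux_hyp {m : ℕ} (Δ : Set (Fin m → ℝ))
    (hΔ : Δ = {α | StrictMono α ∧ ∀ k, 0 ≤ α k ∧ α k < 1})
    (c : Fin m → ℝ) (r : ℝ) (hcr : (∀ k, c k = 0) → r ≠ 0) :
    interior (Subtype.val ⁻¹' {α | ∑ k, α k * c k = r} : Set Δ) = ∅ := by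
  rw [Set.eq_empty_iff_forall_notMem]
  intro x hx
  have hxs : ∑ k, (x : Fin m → ℝ) k * c k = r := by
    have h := interior_subset hx
    simpa using h
  by_cases hc : ∀ k, c k = 0
  · apply hcr hc
    rw [← hxs]
    simp [hc]
  push_neg at hc
  obtain ⟨k0, hk0⟩ := hc
  rw [mem_interior_iff_mem_nhds, Metric.mem_nhds_iff] at hx
  obtain ⟨ε, hε, hball⟩ := hx
  obtain ⟨hmono, hbd⟩ := (Set.ext_iff.mp hΔ (x : Fin m → ℝ)).mp x.2
  set xv : Fin m → ℝ := (x : Fin m → ℝ) with hxv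
  set U : ℝ := if h : (k0 : ℕ) + 1 < m then xv ⟨(k0 : ℕ) + 1, h⟩ else 1 with hU
  have hU1 : xv k0 < U := by
    rw [hU]
    split_ifs with h
    · exact hmono (by simp [Fin.lt_def])
    · exact (hbd k0).2
  have hU2 : U ≤ 1 := by
    rw [hU]
    split_ifs with h
    · exact (hbd _).2.le
    · exact le_refl 1
  have hU3 : ∀ b : Fin m, k0 < b → U ≤ xv b := by
    intro b hb
    have hlt : (k0 : ℕ) + 1 < m := by
      have := b.2
      have : (k0 : ℕ) < (b : ℕ) := hb
      omega
    rw [hU, dif_pos hlt]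
    exact hmono.monotone (by rw [Fin.le_def]; exact hb)
  set t : ℝ := min (ε / 2) ((U - xv k0) / 2) with htdef
  have ht : 0 < t := lt_min (by linarith) (by linarith)
  have ht2 : t < ε := lt_of_le_of_lt (min_le_left _ _) (by linarith)
  have ht3 : xv k0 + t < U := by
    have := min_le_right (ε / 2) ((U - xv k0) / 2)
    rw [← htdef] at this
    linarith
  set y : Fin m → ℝ := fun k => xv k + if k = k0 then t else 0 with hy
  have hyΔ : y ∈ Δ := by
    rw [hΔ]
    constructor
    · intro a b hab
      rw [hy]
      dsimp only
      by_cases ha : a = k0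
      · subst ha
        have hbk : b ≠ a := ne_of_gt hab
        rw [if_pos rfl, if_neg hbk]
        have := hU3 b hab
        linarith
      · by_cases hb : b = k0
        · subst hb
          rw [if_neg ha, if_pos rfl]
          have := hmono hab
          linarith
        · rw [if_neg ha, if_neg hb]
          have := hmono hab
          linarith
    · intro k
      rw [hy]
      dsimp only
      by_cases hk : k = k0
      · subst hk
        rw [if_pos rfl]
        constructor
        · linarith [(hbd k).1]
        · linarith
      · rw [if_neg hk]
        constructor
        · linarith [(hbd k).1]
        · linarith [(hbd k).2]
  have hy_ball : (⟨y, hyΔ⟩ : Δ) ∈ Metric.ball x ε := by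
    rw [Metric.mem_ball, Subtype.dist_eq]
    rw [dist_pi_lt_iff hε]
    intro k
    show dist (xv k + if k = k0 then t else 0) (xv k) < ε
    by_cases hk : k = k0
    · rw [if_pos hk, Real.dist_eq, show xv k + t - xv k = t by ring, abs_of_pos ht]
      exact ht2
    · rw [if_neg hk]
      simpa using hε
  have hys : ∑ k, y k * c k = r := hball hy_ball
  have hsplit : ∑ k, y k * c k = (∑ k, xv k * c k) + t * c k0 := by
    rw [hy]
    have : ∀ k ∈ Finset.univ, (xv k + if k = k0 then t else 0) * c k
        = xv k * c k + (if k = k0 then t * c k else 0) := by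
      intro k _
      by_cases hk : k = k0 <;> simp [hk] <;> ring
    rw [Finset.sum_congr rfl this, Finset.sum_add_distrib, Finset.sum_ite_eq']
    simp
  rw [hsplit, hxs] at hys
  have : t * c k0 = 0 := by linarith
  exact mul_ne_zero (ne_of_gt ht) hk0 this

/-- Remark 6.1 (second assertion): if `gcd(n, d, j_1, …, j_m) = 1` then the set
of parabolic weights for which semistability can differ from stability is
nowhere dense in the space of admissible weight vectors. -/
theorem stmt_3 (n d : ℤ) (hn : 2 ≤ n) (m : ℕ) (hm : 1 ≤ m)
    (j : Fin m → ℤ) (hj : ∀ k, 0 < j k) (hsum : ∑ k, j k = n)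
    (hgcd : ∀ h : ℤ, h ∣ n → h ∣ d → (∀ k, h ∣ j k) → IsUnit h)
    (Δ S : Set (Fin m → ℝ))
    (hΔ : Δ = {α | StrictMono α ∧ ∀ k, 0 ≤ α k ∧ α k < 1})
    (hS : S = {α ∈ Δ | ∃ (nh dh : ℤ) (jhat : Fin m → ℤ),
        0 < nh ∧ nh < n ∧ (∀ k, 0 ≤ jhat k ∧ jhat k ≤ j k) ∧
        (∑ k, jhat k) = nh ∧
        ((dh : ℝ) + ∑ k, α k * (jhat k : ℝ)) / (nh : ℝ)
          = ((d : ℝ) + ∑ k, α k * (j k : ℝ)) / (n : ℝ)}) :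
    IsNowhereDense (Subtype.val ⁻¹' S : Set Δ) := by
  classical
  set C : ℤ := |d| + 2 * n with hC
  set F : Finset (ℤ × ℤ × (Fin m → ℤ)) :=
    Finset.Ioo 0 n ×ˢ Finset.Icc (-C) C ×ˢ Fintype.piFinset (fun k => Finset.Icc 0 (j k))
    with hF
  set G : ℤ × ℤ × (Fin m → ℤ) → Set Δ := fun p =>
    Subtype.val ⁻¹' {α | ∑ k, α k * ((n * p.2.2 k - p.1 * j k : ℤ) : ℝ)
      = ((p.1 * d - n * p.2.1 : ℤ) : ℝ)} with hG
  have hGclosed : ∀ p, IsClosed (G p) := by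
    intro p
    apply IsClosed.preimage continuous_subtype_val
    apply isClosed_eq _ continuous_const
    exact continuous_finset_sum _ (fun k _ => (continuous_apply k).mul continuous_const)
  have hGint : ∀ p ∈ F, interior (G p) = ∅ := by
    rintro ⟨nh, dh, jhat⟩ hp
    rw [hF] at hp
    simp only [Finset.mem_product, Finset.mem_Ioo, Finset.mem_Icc,
      Fintype.mem_piFinset] at hp
    obtain ⟨⟨hnh1, hnh2⟩, _, _⟩ := hp
    apply aux_hyp Δ hΔ
    intro hall hr0
    apply aux_gcd n d nh dh m j jhat hn hgcd hnh1 hnh2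
    · intro k
      have := hall k
      exact_mod_cast this
    · exact_mod_cast hr0
  have hnR : (0 : ℝ) < (n : ℝ) := by exact_mod_cast (by omega : (0:ℤ) < n)
  have hsub : (Subtype.val ⁻¹' S : Set Δ) ⊆ ⋃ p ∈ F, G p := by
    rintro ⟨α, hαΔ⟩ hαS
    simp only [Set.mem_preimage] at hαS
    rw [hS] at hαS
    obtain ⟨-, nh, dh, jhat, hnh1, hnh2, hjh, hjsum, heq⟩ := hαS
    have hαb : ∀ k, 0 ≤ α k ∧ α k < 1 :=
      ((Set.ext_iff.mp hΔ α).mp hαΔ).2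
    have hnhR : (0 : ℝ) < (nh : ℝ) := by exact_mod_cast hnh1
    have hnhnR : (nh : ℝ) ≤ (n : ℝ) := by exact_mod_cast hnh2.le
    set A : ℝ := ∑ k, α k * (j k : ℝ) with hA
    set B : ℝ := ∑ k, α k * (jhat k : ℝ) with hB
    have hA0 : 0 ≤ A := Finset.sum_nonneg fun k _ =>
      mul_nonneg (hαb k).1 (by exact_mod_cast (hj k).le)
    have hA1 : A ≤ (n : ℝ) := by
      have : A ≤ ∑ k, ((j k : ℤ) : ℝ) := Finset.sum_le_sum fun k _ =>
        mul_le_of_le_one_left (by exact_mod_cast (hj k).le) (hαb k).2.le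
      calc A ≤ ∑ k, ((j k : ℤ) : ℝ) := this
        _ = (n : ℝ) := by rw [← Int.cast_sum, hsum]
    have hB0 : 0 ≤ B := Finset.sum_nonneg fun k _ =>
      mul_nonneg (hαb k).1 (by exact_mod_cast (hjh k).1)
    have hB1 : B ≤ (nh : ℝ) := by
      have : B ≤ ∑ k, ((jhat k : ℤ) : ℝ) := Finset.sum_le_sum fun k _ =>
        mul_le_of_le_one_left (by exact_mod_cast (hjh k).1) (hαb k).2.le
      calc B ≤ ∑ k, ((jhat k : ℤ) : ℝ) := this
        _ = (nh : ℝ) := by rw [← Int.cast_sum, hjsum]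
    rw [div_eq_div_iff (ne_of_gt hnhR) (ne_of_gt hnR)] at heq
    -- heq : ((dh : ℝ) + B) * n = ((d : ℝ) + A) * nh
    set Dr : ℝ := ((|d| : ℤ) : ℝ) with hDr
    have hD0 : 0 ≤ Dr := by rw [hDr]; exact_mod_cast abs_nonneg d
    have hdle : (d : ℝ) ≤ Dr := by rw [hDr]; exact_mod_cast le_abs_self d
    have hdge : -Dr ≤ (d : ℝ) := by rw [hDr]; exact_mod_cast neg_abs_le d
    have q1 : (0:ℝ) ≤ (Dr + (n:ℝ) - ((d:ℝ) + A)) * (nh:ℝ) :=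
      mul_nonneg (by linarith) hnhR.le
    have q2 : (0:ℝ) ≤ (Dr + (n:ℝ)) * ((n:ℝ) - (nh:ℝ)) :=
      mul_nonneg (by linarith) (by linarith)
    have q3 : (0:ℝ) ≤ B * (n:ℝ) := mul_nonneg hB0 hnR.le
    have q4 : (0:ℝ) ≤ ((d:ℝ) + A + Dr) * (nh:ℝ) :=
      mul_nonneg (by linarith) hnhR.le
    have q5 : (0:ℝ) ≤ Dr * ((n:ℝ) - (nh:ℝ)) := mul_nonneg hD0 (by linarith)
    have q6 : B * (n:ℝ) ≤ (n:ℝ) * (n:ℝ) :=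
      mul_le_mul_of_nonneg_right (by linarith) hnR.le
    have q7 : (0:ℝ) ≤ (n:ℝ) * (n:ℝ) := mul_nonneg hnR.le hnR.le
    have hup : (dh : ℝ) * (n:ℝ) ≤ (Dr + 2 * (n:ℝ)) * (n:ℝ) := by nlinarith
    have hlo : -((Dr + 2 * (n:ℝ)) * (n:ℝ)) ≤ (dh : ℝ) * (n:ℝ) := by nlinarith
    have hupd : (dh : ℝ) ≤ Dr + 2 * (n:ℝ) :=
      le_of_mul_le_mul_right (by linarith) hnR
    have hlod : -(Dr + 2 * (n:ℝ)) ≤ (dh : ℝ) :=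
      le_of_mul_le_mul_right (by nlinarith) hnR
    have hDabs : Dr = |(d : ℝ)| := by rw [hDr]; push_cast; rfl
    have h1C : ((-C : ℤ) : ℝ) ≤ ((dh : ℤ) : ℝ) := by
      push_cast [hC]; linarith [hDabs.le, hDabs.ge]
    have h2C : ((dh : ℤ) : ℝ) ≤ ((C : ℤ) : ℝ) := by
      push_cast [hC]; linarith [hDabs.le, hDabs.ge]
    have hdhC : -C ≤ dh ∧ dh ≤ C := ⟨by exact_mod_cast h1C, by exact_mod_cast h2C⟩
    apply Set.mem_biUnion (show (nh, dh, jhat) ∈ F by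
      rw [hF]
      simp only [Finset.mem_product, Finset.mem_Ioo, Finset.mem_Icc,
        Fintype.mem_piFinset]
      exact ⟨⟨hnh1, hnh2⟩, ⟨hdhC.1, hdhC.2⟩, fun k => ⟨(hjh k).1, (hjh k).2⟩⟩)
    show α ∈ {α | ∑ k, α k * ((n * jhat k - nh * j k : ℤ) : ℝ)
      = ((nh * d - n * dh : ℤ) : ℝ)}
    show ∑ k, α k * ((n * jhat k - nh * j k : ℤ) : ℝ) = ((nh * d - n * dh : ℤ) : ℝ)
    push_cast
    have hexp : ∑ k, α k * ((n:ℝ) * (jhat k : ℝ) - (nh:ℝ) * (j k : ℝ))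
        = (n:ℝ) * B - (nh:ℝ) * A := by
      rw [hA, hB, Finset.mul_sum, Finset.mul_sum, ← Finset.sum_sub_distrib]
      apply Finset.sum_congr rfl
      intros
      ring
    rw [hexp]
    linarith
  have hTclosed : IsClosed (⋃ p ∈ F, G p) :=
    Set.Finite.isClosed_biUnion F.finite_toSet (fun p _ => hGclosed p)
  have hTint : interior (⋃ p ∈ F, G p) = ∅ :=
    aux_biUnion F G (fun p _ => hGclosed p) hGint
  show interior (closure (Subtype.val ⁻¹' S : Set Δ)) = ∅
  have h1 : closure (Subtype.val ⁻¹' S : Set Δ) ⊆ ⋃ p ∈ F, G p :=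
    closure_minimal hsub hTclosed
  have h2 := interior_mono h1
  rw [hTint] at h2
  exact Set.subset_empty_iff.mp h2
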